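/- Let δ ∈ D and let c be a symmetric copula density with diagonal section δ. Then for every r ∈ [0,1] and every coordinate i: ∫_{[0,1]^d} c(u) 1{u_i < max(u), u_i ≤ r} du = r - δ(r)/d = ∫_0^r (1 - δ'(s)/d) ds. Consequently c = 0 a.e. on {u : ∃i, u_i < max(u) and δ'(u_i) = d}. -/

import Mathlib

open MeasureTheory Set intervalIntegral

open scoped ENNReal

lemma aux_ciSup_perm {d : ℕ} [NeZero d] (u : Fin d → ℝ) (e : Equiv.Perm (Fin d)) :
    (⨆ j, u (e j)) = ⨆ j, u j := by
  have hb : BddAbove (Set.range u) := (Set.finite_range u).bddAbove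
  have hb' : BddAbove (Set.range (fun j => u (e j))) := (Set.finite_range _).bddAbove
  apply le_antisymm
  · exact ciSup_le fun j => le_ciSup hb (e j)
  · refine ciSup_le fun j => ?_
    have := le_ciSup hb' (e.symm j)
    simpa using this

lemma aux_hyperplane_null {d : ℕ} (i j : Fin d) (hij : i ≠ j) :
    (volume : Measure (Fin d → ℝ)) {u | u i = u j} = 0 := by
  set L : (Fin d → ℝ) →ₗ[ℝ] ℝ := (LinearMap.proj i : (Fin d → ℝ) →ₗ[ℝ] ℝ) - (LinearMap.proj j : (Fin d → ℝ) →ₗ[ℝ] ℝ) with hL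
  have hset : {u : Fin d → ℝ | u i = u j} = (LinearMap.ker L : Set (Fin d → ℝ)) := by
    ext u
    simp [hL, sub_eq_zero, LinearMap.mem_ker]
  rw [hset]
  refine MeasureTheory.Measure.addHaar_submodule _ _ ?_
  intro htop
  have : (Pi.single i 1 : Fin d → ℝ) ∈ LinearMap.ker L := htop ▸ Submodule.mem_top
  simp only [LinearMap.mem_ker, hL, LinearMap.sub_apply, LinearMap.proj_apply] at this
  rw [Pi.single_eq_same, Pi.single_eq_of_ne (Ne.symm hij)] at this
  norm_num at this

lemma aux_coord_null {d : ℕ} (i : Fin d) {Z : Set ℝ} (hZ : volume Z = 0) :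
    (volume.restrict (Set.univ.pi (fun _ : Fin d => Set.Icc (0:ℝ) 1)))
      {u : Fin d → ℝ | u i ∈ Z} = 0 := by
  classical
  obtain ⟨Z', hZZ', hZ'm, hZ'0⟩ := exists_measurable_superset_of_null hZ
  refine le_antisymm ?_ zero_le
  calc (volume.restrict (Set.univ.pi (fun _ : Fin d => Set.Icc (0:ℝ) 1)))
        {u : Fin d → ℝ | u i ∈ Z}
      ≤ (volume.restrict (Set.univ.pi (fun _ : Fin d => Set.Icc (0:ℝ) 1)))
        {u : Fin d → ℝ | u i ∈ Z'} := measure_mono (fun u hu => hZZ' hu)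
    _ ≤ volume (Set.univ.pi (fun j : Fin d =>
          if j = i then Z' ∩ Set.Icc (0:ℝ) 1 else Set.Icc (0:ℝ) 1)) := ?_
    _ = 0 := ?_
  · rw [Measure.restrict_apply' (MeasurableSet.univ_pi fun _ => measurableSet_Icc)]
    refine measure_mono ?_
    intro u hu
    rw [Set.mem_pi]
    intro j _
    by_cases h : j = i
    · subst h; simp only [if_pos rfl]
      exact ⟨hu.1, hu.2 j (Set.mem_univ j)⟩
    · simp only [if_neg h]
      exact hu.2 j (Set.mem_univ j)
  · rw [volume_pi_pi]
    refine Finset.prod_eq_zero (Finset.mem_univ i) ?_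
    simp only [if_pos rfl]
    exact le_antisymm ((measure_mono Set.inter_subset_left).trans hZ'0.le) zero_le

lemma aux_ftc (d : ℕ) (hd : 2 ≤ d) (δ δ' : ℝ → ℝ)
    (hmono : MonotoneOn δ (Set.Icc 0 1))
    (hlip : ∀ s ∈ Set.Icc (0:ℝ) 1, ∀ t ∈ Set.Icc (0:ℝ) 1,
      |δ s - δ t| ≤ (d : ℝ) * |s - t|)
    (h0 : δ 0 = 0) (h1 : δ 1 = 1)
    (hderiv : ∀ᵐ t ∂(volume.restrict (Set.Icc (0:ℝ) 1)), HasDerivAt δ (δ' t) t) :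
    ∃ ρ : ℝ → ℝ≥0∞, Measurable ρ ∧
      (∀ᵐ x ∂(volume : Measure ℝ), x ∈ Set.Ioo (0:ℝ) 1 → (ρ x).toReal = δ' x) ∧
      (∀ r ∈ Set.Icc (0:ℝ) 1, ∫⁻ x in Set.Ioc 0 r, ρ x = ENNReal.ofReal (δ r)) ∧
      (∀ᵐ x ∂(volume : Measure ℝ), ρ x < ⊤) := by
  classical
  set Cl : ℝ → ℝ := fun x => max 0 (min x 1) with hCl
  have hClmono : Monotone Cl := fun x y hxy =>
    max_le_max le_rfl (min_le_min hxy le_rfl)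
  have hClmem : ∀ x, Cl x ∈ Icc (0:ℝ) 1 := fun x =>
    ⟨le_max_left _ _, max_le zero_le_one (min_le_right _ _)⟩
  have hClid : ∀ x ∈ Icc (0:ℝ) 1, Cl x = x := fun x hx => by
    simp [hCl, min_eq_left hx.2, max_eq_right hx.1]
  have hClcont : Continuous Cl := continuous_const.max (continuous_id.min continuous_const)
  have hδcont : ContinuousOn δ (Icc 0 1) := by
    have : LipschitzOnWith (Real.toNNReal d) δ (Icc 0 1) := by
      apply LipschitzOnWith.of_dist_le_mul
      intro x hx y hy
      rw [Real.dist_eq, Real.dist_eq]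
      simpa [Real.coe_toNNReal _ (by positivity : (0:ℝ) ≤ (d:ℝ))] using hlip x hx y hy
    exact this.continuousOn
  have hFcont : Continuous (fun x => δ (Cl x)) :=
    hδcont.comp_continuous hClcont hClmem
  have hlip1 : ∀ x y, x ≤ y → δ (Cl y) - δ (Cl x) ≤ (d:ℝ) * (Cl y - Cl x) := by
    intro x y hxy
    have h := hlip (Cl y) (hClmem y) (Cl x) (hClmem x)
    have h2 : |Cl y - Cl x| = Cl y - Cl x := abs_of_nonneg (by linarith [hClmono hxy])
    calc δ (Cl y) - δ (Cl x) ≤ |δ (Cl y) - δ (Cl x)| := le_abs_self _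
      _ ≤ (d:ℝ) * |Cl y - Cl x| := h
      _ = (d:ℝ) * (Cl y - Cl x) := by rw [h2]
  set F : StieltjesFunction ℝ :=
    { toFun := fun x => δ (Cl x)
      mono' := fun x y hxy => hmono (hClmem x) (hClmem y) (hClmono hxy)
      right_continuous' := fun x => (hFcont.continuousAt).continuousWithinAt } with hF
  set G : StieltjesFunction ℝ :=
    { toFun := fun x => (d:ℝ) * Cl x - δ (Cl x)
      mono' := fun x y hxy => by
        have := hlip1 x y hxy
        dsimp only
        linarith
      right_continuous' := fun x => by
        exact (((continuous_const.mul hClcont).sub hFcont).continuousAt).continuousWithinAt } with hG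
  -- the sum measure is d • Lebesgue on (0,1]
  have hsum_meas : F.measure + G.measure = ((d : ℝ≥0∞) • (volume.restrict (Ioc 0 1))) := by
    rw [← StieltjesFunction.measure_add]
    have hfin : IsFiniteMeasure (F + G).measure := by
      apply StieltjesFunction.isFiniteMeasure (l := 0) (u := (d:ℝ))
      · have hev : ∀ᶠ x in Filter.atBot, ((F + G) : StieltjesFunction ℝ) x = 0 := by
          filter_upwards [Filter.eventually_le_atBot (0:ℝ)] with x hx
          have : Cl x = 0 := by simp [hCl, min_eq_left (hx.trans zero_le_one), max_eq_left hx]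
          simp [StieltjesFunction.add_apply, hF, hG, this, h0]
        exact Filter.Tendsto.congr' (hev.mono fun x hx => hx.symm) tendsto_const_nhds
      · have hev : ∀ᶠ x in Filter.atTop, ((F + G) : StieltjesFunction ℝ) x = (d:ℝ) := by
          filter_upwards [Filter.eventually_ge_atTop (1:ℝ)] with x hx
          have : Cl x = 1 := by simp [hCl, min_eq_right hx, max_eq_right zero_le_one]
          simp [StieltjesFunction.add_apply, hF, hG, this, h1]
        exact Filter.Tendsto.congr' (hev.mono fun x hx => hx.symm) tendsto_const_nhds
    refine MeasureTheory.Measure.ext_of_Ioc _ _ (fun a b hab => ?_)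
    rw [StieltjesFunction.measure_Ioc]
    have hGF : ∀ x, ((F + G) : StieltjesFunction ℝ) x = (d:ℝ) * Cl x := by
      intro x
      have e1 : (F:ℝ→ℝ) x = δ (Cl x) := rfl
      have e2 : (G:ℝ→ℝ) x = (d:ℝ) * Cl x - δ (Cl x) := rfl
      rw [StieltjesFunction.add_apply, e1, e2]; ring
    rw [hGF, hGF]
    rw [Measure.smul_apply, Measure.restrict_apply measurableSet_Ioc,
      Set.Ioc_inter_Ioc, Real.volume_Ioc]
    have hd0 : (0:ℝ) ≤ (d:ℝ) := by positivity
    have hcast : (d : ℝ≥0∞) = ENNReal.ofReal (d:ℝ) := by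
      simp [ENNReal.ofReal_natCast]
    rw [hcast, smul_eq_mul, ← ENNReal.ofReal_mul hd0]
    have : (d:ℝ) * Cl b - (d:ℝ) * Cl a = (d:ℝ) * (Cl b - Cl a) := by ring
    rw [this]
    have key : ENNReal.ofReal (Cl b - Cl a) = ENNReal.ofReal (min b 1 - max a 0) := by
      rcases le_total b a with hba | hab'
      · rw [ENNReal.ofReal_of_nonpos, ENNReal.ofReal_of_nonpos]
        · have : min b 1 ≤ max a 0 := (min_le_left _ _).trans (hba.trans (le_max_left _ _))
          linarith
        · have := hClmono hba; linarith
      · rcases le_total b 0 with hb0 | hb0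
        · have hCb : Cl b = 0 := by simp [hCl, min_eq_left (hb0.trans zero_le_one), max_eq_left hb0]
          have hCa : Cl a = 0 := by
            have ha0 : a ≤ 0 := hab'.trans hb0
            simp [hCl, min_eq_left (ha0.trans zero_le_one), max_eq_left ha0]
          rw [hCb, hCa, ENNReal.ofReal_of_nonpos (by norm_num), ENNReal.ofReal_of_nonpos]
          have : min b 1 ≤ max a 0 := (min_le_left _ _).trans (hb0.trans (le_max_right _ _))
          linarith
        · rcases le_total 1 a with ha1 | ha1
          · have hCa : Cl a = 1 := by simp [hCl, min_eq_right ha1, max_eq_right zero_le_one]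
            have hCb : Cl b = 1 := by
              have : (1:ℝ) ≤ b := ha1.trans hab'
              simp [hCl, min_eq_right this, max_eq_right zero_le_one]
            rw [hCb, hCa, ENNReal.ofReal_of_nonpos (by norm_num), ENNReal.ofReal_of_nonpos]
            have : min b 1 ≤ max a 0 := (min_le_right _ _).trans (ha1.trans (le_max_left _ _))
            linarith
          · have hCb : Cl b = min b 1 := by
              rw [hCl]; exact max_eq_right (le_min hb0 zero_le_one)
            have hCa : Cl a = max a 0 := by
              rw [hCl]
              simp [hCl, min_eq_left ha1, max_comm]
            rw [hCb, hCa]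
    rw [ENNReal.ofReal_mul hd0, ENNReal.ofReal_mul hd0, key]
  have hFfin : IsFiniteMeasure F.measure := by
    apply StieltjesFunction.isFiniteMeasure (l := 0) (u := 1)
    · have hev : ∀ᶠ x in Filter.atBot, F x = 0 := by
        filter_upwards [Filter.eventually_le_atBot (0:ℝ)] with x hx
        have : Cl x = 0 := by simp [hCl, min_eq_left (hx.trans zero_le_one), max_eq_left hx]
        simp [hF, this, h0]
      exact Filter.Tendsto.congr' (hev.mono fun x hx => hx.symm) tendsto_const_nhds
    · have hev : ∀ᶠ x in Filter.atTop, F x = 1 := by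
        filter_upwards [Filter.eventually_ge_atTop (1:ℝ)] with x hx
        have : Cl x = 1 := by simp [hCl, min_eq_right hx, max_eq_right zero_le_one]
        simp [hF, this, h1]
      exact Filter.Tendsto.congr' (hev.mono fun x hx => hx.symm) tendsto_const_nhds
  have hac : F.measure ≪ (volume : Measure ℝ) := by
    refine Measure.AbsolutelyContinuous.mk (fun s hs hs0 => ?_)
    have h1' : F.measure s ≤ (F.measure + G.measure) s := by
      simp only [Measure.add_apply]; exact le_self_add
    rw [hsum_meas] at h1'
    refine le_antisymm (h1'.trans ?_) zero_le
    rw [Measure.smul_apply, Measure.restrict_apply hs]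
    have : volume (s ∩ Ioc 0 1) = 0 :=
      le_antisymm (le_trans (measure_mono inter_subset_left) hs0.le) zero_le
    simp [this]
  set ρ := F.measure.rnDeriv volume with hρ
  refine ⟨ρ, Measure.measurable_rnDeriv _ _, ?_, ?_, Measure.rnDeriv_lt_top _ _⟩
  · have hae := F.ae_hasDerivAt
    have hderiv' : ∀ᵐ x ∂(volume : Measure ℝ), x ∈ Icc (0:ℝ) 1 → HasDerivAt δ (δ' x) x :=
      (ae_restrict_iff' measurableSet_Icc).mp hderiv
    filter_upwards [hae, hderiv'] with x hFx hδx hx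
    have hev : (fun y => δ y) =ᶠ[nhds x] F := by
      filter_upwards [isOpen_Ioo.mem_nhds hx] with y hy
      simp [hF, hClid y (Ioo_subset_Icc_self hy)]
    have hF' : HasDerivAt δ ((ρ x).toReal) x := hFx.congr_of_eventuallyEq hev
    exact hF'.unique (hδx (Ioo_subset_Icc_self hx))
  · intro r hr
    have hwd : volume.withDensity ρ = F.measure :=
      Measure.withDensity_rnDeriv_eq _ _ hac
    have : ∫⁻ x in Set.Ioc 0 r, ρ x = (volume.withDensity ρ) (Set.Ioc 0 r) := by
      rw [withDensity_apply _ measurableSet_Ioc]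
    rw [this, hwd, StieltjesFunction.measure_Ioc]
    have hC0 : Cl 0 = 0 := hClid 0 (by norm_num)
    have hCr : Cl r = r := hClid r hr
    simp [hF, hC0, hCr, h0]

/-- For a symmetric copula density c with diagonal section δ:
∫ c(u)1{uᵢ < max u, uᵢ ≤ r} du = r - δ(r)/d = ∫_0^r (1 - δ'(s)/d) ds, and
c = 0 a.e. on {u : ∃ i, uᵢ < max u and δ'(uᵢ) = d}. -/
theorem symmetric_copula_off_max_marginal
    (d : ℕ) (hd : 2 ≤ d) (δ δ' : ℝ → ℝ)
    (hmono : MonotoneOn δ (Set.Icc 0 1))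
    (hlip : ∀ s ∈ Set.Icc (0:ℝ) 1, ∀ t ∈ Set.Icc (0:ℝ) 1,
      |δ s - δ t| ≤ (d : ℝ) * |s - t|)
    (h0 : δ 0 = 0) (h1 : δ 1 = 1)
    (hderiv : ∀ᵐ t ∂(volume.restrict (Set.Icc (0:ℝ) 1)), HasDerivAt δ (δ' t) t)
    (hd' : ∀ᵐ t ∂(volume.restrict (Set.Icc (0:ℝ) 1)), δ' t ∈ Set.Icc (0:ℝ) (d:ℝ))
    (c : (Fin d → ℝ) → ℝ)
    (hint : IntegrableOn c (Set.univ.pi (fun _ : Fin d => Set.Icc (0:ℝ) 1)))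
    (hnn : ∀ u, 0 ≤ c u)
    (hsym : ∀ (σ : Equiv.Perm (Fin d)) (u : Fin d → ℝ), c (u ∘ σ) = c u)
    (hmarg : ∀ i : Fin d, ∀ r ∈ Set.Icc (0:ℝ) 1,
      (∫ u in Set.univ.pi (fun _ : Fin d => Set.Icc (0:ℝ) 1),
        c u * (if u i ≤ r then 1 else 0)) = r)
    (hdiag : ∀ r ∈ Set.Icc (0:ℝ) 1,
      (∫ u in Set.univ.pi (fun _ : Fin d => Set.Icc (0:ℝ) 1),
        c u * (if (⨆ i, u i) ≤ r then 1 else 0)) = δ r) :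
    (∀ i : Fin d, ∀ r ∈ Set.Icc (0:ℝ) 1,
      (∫ u in Set.univ.pi (fun _ : Fin d => Set.Icc (0:ℝ) 1),
        c u * (if u i < (⨆ j, u j) ∧ u i ≤ r then 1 else 0))
        = r - δ r / d ∧
      (∫ u in Set.univ.pi (fun _ : Fin d => Set.Icc (0:ℝ) 1),
        c u * (if u i < (⨆ j, u j) ∧ u i ≤ r then 1 else 0))
        = ∫ s in (0:ℝ)..r, (1 - δ' s / d)) ∧
    (∀ᵐ u ∂(volume.restrict (Set.univ.pi (fun _ : Fin d => Set.Icc (0:ℝ) 1))),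
      (∃ i, u i < (⨆ j, u j) ∧ δ' (u i) = d) → c u = 0) := by
  haveI : NeZero d := ⟨by omega⟩
  have hdpos : (0:ℝ) < d := by exact_mod_cast (by omega : 0 < d)
  have hdne : (d:ℝ) ≠ 0 := ne_of_gt hdpos
  set Box : Set (Fin d → ℝ) := Set.univ.pi (fun _ : Fin d => Set.Icc (0:ℝ) 1) with hBoxdef
  have hBoxm : MeasurableSet Box := MeasurableSet.univ_pi fun _ => measurableSet_Icc
  have hMmeas : Measurable (fun u : Fin d → ℝ => ⨆ j, u j) :=
    Measurable.iSup (fun j => measurable_pi_apply j)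
  have hMax : ∀ (u : Fin d → ℝ) (i : Fin d), u i ≤ ⨆ j, u j :=
    fun u i => le_ciSup (Set.finite_range u).bddAbove i
  have hMle1 : ∀ u ∈ Box, (⨆ j, u j) ≤ 1 :=
    fun u hu => ciSup_le fun j => (hu j (Set.mem_univ j)).2
  have hexists_max : ∀ u : Fin d → ℝ, ∃ i, u i = ⨆ k, u k := by
    intro u
    obtain ⟨i, -, hi⟩ := Finset.exists_mem_eq_sup' (Finset.univ_nonempty (α := Fin d)) u
    exact ⟨i, by rw [← Finset.sup'_univ_eq_ciSup, hi]⟩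
  -- integrability of indicator-weighted integrands
  have hIndInt : ∀ (p : (Fin d → ℝ) → Prop) (inst : DecidablePred p), MeasurableSet {u | p u} →
      Integrable (fun u => c u * (if p u then 1 else 0)) (volume.restrict Box) := by
    intro p inst hp
    have hm : AEStronglyMeasurable (fun u => if p u then (1:ℝ) else 0) (volume.restrict Box) :=
      (Measurable.ite hp measurable_const measurable_const).aestronglyMeasurable
    have h1 : Integrable (fun u => (if p u then (1:ℝ) else 0) * c u) (volume.restrict Box) := by
      refine Integrable.bdd_mul (c := 1) hint hm (Filter.Eventually.of_forall fun u => ?_)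
      by_cases h : p u <;> simp [h]
    exact h1.congr (Filter.Eventually.of_forall fun u => mul_comm _ _)
  have hP1m : ∀ (i : Fin d) (r : ℝ),
      MeasurableSet {u : Fin d → ℝ | u i = (⨆ k, u k) ∧ u i ≤ r} := fun i r =>
    (measurableSet_eq_fun (measurable_pi_apply i) hMmeas).inter
      (measurableSet_le (measurable_pi_apply i) measurable_const)
  have hP2m : ∀ (i : Fin d) (r : ℝ),
      MeasurableSet {u : Fin d → ℝ | u i < (⨆ k, u k) ∧ u i ≤ r} := fun i r =>
    (measurableSet_lt (measurable_pi_apply i) hMmeas).inter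
      (measurableSet_le (measurable_pi_apply i) measurable_const)
  -- symmetry
  have hsymA : ∀ (i j : Fin d) (r : ℝ),
      (∫ u in Box, c u * (if u i = (⨆ k, u k) ∧ u i ≤ r then 1 else 0)) =
      ∫ u in Box, c u * (if u j = (⨆ k, u k) ∧ u j ≤ r then 1 else 0) := by
    intro i j r
    set σ : Equiv.Perm (Fin d) := Equiv.swap i j with hσ
    set T : (Fin d → ℝ) ≃ᵐ (Fin d → ℝ) :=
      MeasurableEquiv.piCongrLeft (fun _ : Fin d => ℝ) σ with hT
    have hTapp : ∀ (u : Fin d → ℝ) (k : Fin d), T u k = u (σ.symm k) := by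
      intro u k
      have h1 : T u (σ (σ.symm k)) = u (σ.symm k) := by
        rw [hT, MeasurableEquiv.coe_piCongrLeft, Equiv.piCongrLeft_apply_apply]
      simpa using h1
    have mp0 : MeasurePreserving T volume volume :=
      volume_measurePreserving_piCongrLeft (fun _ : Fin d => ℝ) σ
    have hpre : ⇑T ⁻¹' Box = Box := by
      ext u
      simp only [Set.mem_preimage, hBoxdef, Set.mem_univ_pi]
      constructor
      · intro h k
        have := h (σ k)
        rwa [hTapp, Equiv.symm_apply_apply] at this
      · intro h k
        rw [hTapp]; exact h _
    have mp : MeasurePreserving T (volume.restrict Box) (volume.restrict Box) := by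
      refine ⟨T.measurable, ?_⟩
      have h2 : (Measure.map T volume).restrict Box = Measure.map T (volume.restrict (⇑T ⁻¹' Box)) :=
        Measure.restrict_map T.measurable hBoxm
      rw [mp0.map_eq, hpre] at h2
      exact h2.symm
    have key := mp.integral_comp T.measurableEmbedding
      (fun v => c v * (if v i = (⨆ k, v k) ∧ v i ≤ r then 1 else 0))
    calc (∫ u in Box, c u * (if u i = (⨆ k, u k) ∧ u i ≤ r then 1 else 0))
        = ∫ u in Box, c (T u) * (if T u i = (⨆ k, T u k) ∧ T u i ≤ r then 1 else 0) := key.symm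
      _ = ∫ u in Box, c u * (if u j = (⨆ k, u k) ∧ u j ≤ r then 1 else 0) := by
          refine integral_congr_ae (Filter.Eventually.of_forall fun u => ?_)
          have hTu : ⇑T u = u ∘ σ.symm := funext fun k => hTapp u k
          have hc : c (T u) = c u := by rw [hTu]; exact hsym σ.symm u
          have hj : T u i = u j := by
            rw [hTapp, hσ, Equiv.symm_swap, Equiv.swap_apply_left]
          have hs : (⨆ k, T u k) = ⨆ k, u k := by
            have := aux_ciSup_perm u σ.symm
            calc (⨆ k, T u k) = ⨆ k, u (σ.symm k) := by
                  exact iSup_congr fun k => hTapp u k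
              _ = ⨆ k, u k := this
          simp only [hc, hj, hs]
  -- the "on-max" integral equals δ r / d
  have hA : ∀ (i : Fin d), ∀ r ∈ Set.Icc (0:ℝ) 1,
      (∫ u in Box, c u * (if u i = (⨆ k, u k) ∧ u i ≤ r then 1 else 0)) = δ r / d := by
    intro i r hr
    have hties : ∀ᵐ u ∂(volume.restrict Box), ∀ i' j' : Fin d, i' ≠ j' → u i' ≠ u j' := by
      rw [ae_all_iff]; intro i'
      rw [ae_all_iff]; intro j'
      by_cases hij : i' = j'
      · exact Filter.Eventually.of_forall fun u h => absurd hij h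
      · have h0' : (volume.restrict Box) {u : Fin d → ℝ | u i' = u j'} = 0 :=
          le_antisymm ((Measure.restrict_apply_le _ _).trans
            (aux_hyperplane_null i' j' hij).le) zero_le
        rw [ae_iff]
        have hseteq : {u : Fin d → ℝ | ¬ (i' ≠ j' → u i' ≠ u j')} = {u | u i' = u j'} := by
          ext u; simp [hij]
        rw [hseteq]
        exact h0'
    have hsum_pt : ∀ u : Fin d → ℝ, (∀ i' j' : Fin d, i' ≠ j' → u i' ≠ u j') →
        (∑ j : Fin d, c u * (if u j = (⨆ k, u k) ∧ u j ≤ r then 1 else 0))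
          = c u * (if (⨆ k, u k) ≤ r then 1 else 0) := by
      intro u hu
      obtain ⟨i0, hi0⟩ := hexists_max u
      rw [Finset.sum_eq_single i0]
      · have hiff : (u i0 = (⨆ k, u k) ∧ u i0 ≤ r) ↔ ((⨆ k, u k) ≤ r) := by
          constructor
          · rintro ⟨h1, h2⟩; rwa [← h1]
          · intro h; exact ⟨hi0, by rw [hi0]; exact h⟩
        rw [if_congr hiff rfl rfl]
      · intro b _ hb
        have hfalse : ¬ (u b = (⨆ k, u k) ∧ u b ≤ r) := by
          rintro ⟨h1, -⟩
          exact hu b i0 hb (h1.trans hi0.symm)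
        rw [if_neg hfalse, mul_zero]
      · intro h; exact absurd (Finset.mem_univ i0) h
    have hsum : (∑ j : Fin d, ∫ u in Box, c u * (if u j = (⨆ k, u k) ∧ u j ≤ r then 1 else 0))
        = δ r := by
      rw [← integral_finset_sum Finset.univ (fun j _ => hIndInt _ _ (hP1m j r))]
      rw [show (∫ u in Box, ∑ j : Fin d, c u * (if u j = (⨆ k, u k) ∧ u j ≤ r then 1 else 0))
          = ∫ u in Box, c u * (if (⨆ k, u k) ≤ r then 1 else 0) from
        integral_congr_ae (hties.mono fun u hu => hsum_pt u hu)]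
      exact hdiag r hr
    rw [Finset.sum_congr rfl (fun j _ => hsymA j i r)] at hsum
    rw [Finset.sum_const, Finset.card_univ, Fintype.card_fin, nsmul_eq_mul] at hsum
    rw [eq_div_iff hdne, mul_comm]
    exact hsum
  -- first identity
  have hpart1 : ∀ (i : Fin d), ∀ r ∈ Set.Icc (0:ℝ) 1,
      (∫ u in Box, c u * (if u i < (⨆ j, u j) ∧ u i ≤ r then 1 else 0)) = r - δ r / d := by
    intro i r hr
    have hadd : ∀ u : Fin d → ℝ,
        c u * (if u i < (⨆ j, u j) ∧ u i ≤ r then 1 else 0)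
          + c u * (if u i = (⨆ j, u j) ∧ u i ≤ r then 1 else 0)
        = c u * (if u i ≤ r then 1 else 0) := by
      intro u
      by_cases h1 : u i ≤ r
      · rcases lt_or_eq_of_le (hMax u i) with h2 | h2
        · rw [if_pos h1, if_pos ⟨h2, h1⟩, if_neg (fun hc => absurd hc.1 (ne_of_lt h2)),
            mul_zero, add_zero]
        · have hn : ¬ (u i < ⨆ j, u j) := by rw [h2]; exact lt_irrefl _
          rw [if_pos h1, if_neg (fun hc => hn hc.1), if_pos ⟨h2, h1⟩, mul_zero, zero_add]
      · rw [if_neg h1, if_neg (fun hc => h1 hc.2), if_neg (fun hc => h1 hc.2), mul_zero, add_zero]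
    have h2 : (∫ u in Box, (c u * (if u i < (⨆ j, u j) ∧ u i ≤ r then 1 else 0)
          + c u * (if u i = (⨆ j, u j) ∧ u i ≤ r then 1 else 0))) = r := by
      rw [integral_congr_ae (Filter.Eventually.of_forall hadd)]
      exact hmarg i r hr
    rw [integral_add (hIndInt _ _ (hP2m i r)) (hIndInt _ _ (hP1m i r))] at h2
    rw [hA i r hr] at h2
    linarith
  -- FTC part
  obtain ⟨ρ, hρmeas, hρδ', hρint, hρlt⟩ := aux_ftc d hd δ δ' hmono hlip h0 h1 hderiv
  have hδnn : ∀ r ∈ Set.Icc (0:ℝ) 1, 0 ≤ δ r := fun r hr => by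
    have := hmono (Set.mem_Icc.mpr ⟨le_rfl, zero_le_one⟩) hr hr.1
    rwa [h0] at this
  have hone : ∀ᵐ x ∂(volume : Measure ℝ), x ≠ 1 := by
    rw [ae_iff]
    have : {x : ℝ | ¬ x ≠ 1} = {1} := by ext x; simp
    rw [this]
    exact Real.volume_singleton
  have hae_eq : ∀ r ∈ Set.Icc (0:ℝ) 1,
      (fun x => (ρ x).toReal) =ᵐ[volume.restrict (Set.Ioc (0:ℝ) r)] δ' := by
    intro r hr
    filter_upwards [ae_restrict_mem measurableSet_Ioc, ae_restrict_of_ae hρδ',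
      ae_restrict_of_ae hone] with x hx h1x h2x
    exact h1x ⟨hx.1, lt_of_le_of_ne (hx.2.trans hr.2) h2x⟩
  have hρReal : ∀ r ∈ Set.Icc (0:ℝ) 1,
      IntegrableOn (fun x => (ρ x).toReal) (Set.Ioc (0:ℝ) r) volume := by
    intro r hr
    refine integrable_toReal_of_lintegral_ne_top hρmeas.aemeasurable ?_
    rw [hρint r hr]; exact ENNReal.ofReal_ne_top
  have hδ'int : ∀ r ∈ Set.Icc (0:ℝ) 1, IntegrableOn δ' (Set.Ioc (0:ℝ) r) volume :=
    fun r hr => (hρReal r hr).congr (hae_eq r hr)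
  have hδ'eq : ∀ r ∈ Set.Icc (0:ℝ) 1, (∫ x in Set.Ioc (0:ℝ) r, δ' x) = δ r := by
    intro r hr
    rw [← integral_congr_ae (hae_eq r hr)]
    rw [integral_toReal hρmeas.aemeasurable (ae_restrict_of_ae hρlt)]
    rw [hρint r hr, ENNReal.toReal_ofReal (hδnn r hr)]
  have hpart1b : ∀ r ∈ Set.Icc (0:ℝ) 1,
      (∫ s in (0:ℝ)..r, (1 - δ' s / d)) = r - δ r / d := by
    intro r hr
    have h0r : (0:ℝ) ≤ r := hr.1
    have hII : IntervalIntegrable δ' volume 0 r :=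
      (intervalIntegrable_iff_integrableOn_Ioc_of_le h0r).mpr (hδ'int r hr)
    rw [intervalIntegral.integral_sub intervalIntegrable_const (hII.div_const _)]
    rw [intervalIntegral.integral_div, intervalIntegral.integral_const, smul_eq_mul, mul_one]
    rw [intervalIntegral.integral_of_le h0r, hδ'eq r hr]
    norm_num
  refine ⟨fun i r hr => ⟨hpart1 i r hr, (hpart1 i r hr).trans (hpart1b r hr).symm⟩, ?_⟩
  -- Part 2: a.e. vanishing
  set Tset : Set ℝ := {x | ((ρ x).toReal) = (d:ℝ)} with hTdef
  have hTmeas : MeasurableSet Tset := hρmeas.ennreal_toReal (measurableSet_singleton (d:ℝ))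
  have hPi : ∀ i : Fin d, ∀ᵐ u ∂(volume.restrict Box),
      (u i < (⨆ j, u j) ∧ (ρ (u i)).toReal = (d:ℝ)) → c u = 0 := by
    intro i
    set dens : (Fin d → ℝ) → ℝ≥0∞ :=
      fun u => ENNReal.ofReal (c u * (if u i < (⨆ j, u j) then 1 else 0)) with hdens
    have hiltm : MeasurableSet {u : Fin d → ℝ | u i < ⨆ j, u j} :=
      measurableSet_lt (measurable_pi_apply i) hMmeas
    have hindm : Measurable (fun u : Fin d → ℝ => if u i < (⨆ j, u j) then (1:ℝ) else 0) :=
      Measurable.ite hiltm measurable_const measurable_const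
    have hdensm : AEMeasurable dens (volume.restrict Box) :=
      (hint.aestronglyMeasurable.aemeasurable.mul hindm.aemeasurable).ennreal_ofReal
    set ξ : Measure ℝ := Measure.map (fun u : Fin d → ℝ => u i)
      ((volume.restrict Box).withDensity dens) with hξdef
    have hξapp : ∀ s : Set ℝ, MeasurableSet s →
        ξ s = ∫⁻ u, ((fun v : Fin d → ℝ => v i) ⁻¹' s).indicator dens u
          ∂(volume.restrict Box) := by
      intro s hs
      rw [hξdef, Measure.map_apply (measurable_pi_apply i) hs,
        withDensity_apply _ ((measurable_pi_apply i) hs),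
        ← lintegral_indicator ((measurable_pi_apply i) hs)]
    have hofReal : ∀ r : ℝ, ∀ u : Fin d → ℝ,
        ((fun v : Fin d → ℝ => v i) ⁻¹' (Set.Iic r)).indicator dens u
          = ENNReal.ofReal (c u * (if u i < (⨆ j, u j) ∧ u i ≤ r then 1 else 0)) := by
      intro r u
      by_cases h1 : u i ≤ r
      · rw [Set.indicator_of_mem (show u ∈ (fun v : Fin d → ℝ => v i) ⁻¹' Set.Iic r from h1)]
        by_cases h2 : u i < ⨆ j, u j
        · show ENNReal.ofReal (c u * (if u i < (⨆ j, u j) then 1 else 0)) = _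
          rw [if_pos h2, if_pos ⟨h2, h1⟩]
        · show ENNReal.ofReal (c u * (if u i < (⨆ j, u j) then 1 else 0)) = _
          rw [if_neg h2, if_neg (fun hc => h2 hc.1)]
      · rw [Set.indicator_of_notMem (show u ∉ (fun v : Fin d → ℝ => v i) ⁻¹' Set.Iic r from h1)]
        rw [if_neg (fun hc => h1 hc.2), mul_zero, ENNReal.ofReal_zero]
    have hξIic : ∀ r ∈ Set.Icc (0:ℝ) 1, ξ (Set.Iic r) = ENNReal.ofReal (r - δ r / d) := by
      intro r hr
      rw [hξapp _ measurableSet_Iic]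
      rw [lintegral_congr fun u => hofReal r u]
      rw [← ofReal_integral_eq_lintegral_ofReal (hIndInt _ _ (hP2m i r))
        (Filter.Eventually.of_forall fun u =>
          mul_nonneg (hnn u) (by split <;> norm_num))]
      rw [hpart1 i r hr]
    have hξneg : ∀ r : ℝ, r < 0 → ξ (Set.Iic r) = 0 := by
      intro r hrneg
      rw [hξapp _ measurableSet_Iic]
      have hz : ∀ᵐ u ∂(volume.restrict Box),
          ((fun v : Fin d → ℝ => v i) ⁻¹' (Set.Iic r)).indicator dens u = 0 := by
        filter_upwards [ae_restrict_mem hBoxm] with u hu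
        have : ¬ (u i ≤ r) := not_le.mpr (lt_of_lt_of_le hrneg (hu i (Set.mem_univ i)).1)
        rw [Set.indicator_of_notMem (show u ∉ (fun v : Fin d → ℝ => v i) ⁻¹' Set.Iic r from this)]
      rw [lintegral_congr_ae hz, lintegral_zero]
    have hξtop : ∀ r : ℝ, 1 < r → ξ (Set.Iic r) = ξ (Set.Iic 1) := by
      intro r hr1
      rw [hξapp _ measurableSet_Iic, hξapp _ measurableSet_Iic]
      refine lintegral_congr_ae ?_
      filter_upwards [ae_restrict_mem hBoxm] with u hu
      have h1 : u i ≤ 1 := (hu i (Set.mem_univ i)).2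
      have h2 : u i ≤ r := h1.trans hr1.le
      rw [Set.indicator_of_mem (show u ∈ (fun v : Fin d → ℝ => v i) ⁻¹' Set.Iic r from h2),
        Set.indicator_of_mem (show u ∈ (fun v : Fin d → ℝ => v i) ⁻¹' Set.Iic 1 from h1)]
    have hξfin : IsFiniteMeasure ξ := by
      constructor
      rw [hξdef, Measure.map_apply (measurable_pi_apply i) MeasurableSet.univ,
        Set.preimage_univ, withDensity_apply _ MeasurableSet.univ, Measure.restrict_univ]
      calc ∫⁻ u, dens u ∂(volume.restrict Box)
          ≤ ∫⁻ u, ENNReal.ofReal (c u) ∂(volume.restrict Box) := by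
            refine lintegral_mono fun u => ?_
            rw [hdens]
            refine ENNReal.ofReal_le_ofReal ?_
            by_cases h : u i < ⨆ j, u j
            · rw [if_pos h, mul_one]
            · rw [if_neg h, mul_zero]; exact hnn u
        _ < ⊤ := hint.lintegral_lt_top
    set η : Measure ℝ := (volume.restrict (Set.Ioc (0:ℝ) 1)).withDensity
        (fun x => ENNReal.ofReal (1 - (ρ x).toReal / d)) with hηdef
    have hηapp : ∀ s : Set ℝ, MeasurableSet s →
        η s = ∫⁻ x in s ∩ Set.Ioc (0:ℝ) 1, ENNReal.ofReal (1 - (ρ x).toReal / d) ∂volume := by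
      intro s hs
      rw [hηdef, withDensity_apply _ hs, Measure.restrict_restrict hs]
    have hηIic : ∀ r ∈ Set.Icc (0:ℝ) 1, η (Set.Iic r) = ENNReal.ofReal (r - δ r / d) := by
      intro r hr
      rw [hηapp _ measurableSet_Iic]
      have hset : Set.Iic r ∩ Set.Ioc (0:ℝ) 1 = Set.Ioc 0 r := by
        rw [Set.inter_comm, Set.Ioc_inter_Iic, min_eq_right hr.2]
      rw [hset]
      have hconst : IntegrableOn (fun _ : ℝ => (1:ℝ)) (Set.Ioc (0:ℝ) r) volume := by
        refine (integrableOn_const_iff).mpr (Or.inr ?_)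
        rw [Real.volume_Ioc]; exact ENNReal.ofReal_lt_top
      have hg_int : IntegrableOn (fun x => 1 - (ρ x).toReal / d) (Set.Ioc (0:ℝ) r) volume :=
        hconst.sub ((hρReal r hr).div_const _)
      have hg_nn : 0 ≤ᵐ[volume.restrict (Set.Ioc (0:ℝ) r)]
          (fun x => 1 - (ρ x).toReal / d) := by
        have hsub : Set.Ioc (0:ℝ) r ⊆ Set.Icc (0:ℝ) 1 :=
          Set.Ioc_subset_Icc_self.trans (Set.Icc_subset_Icc le_rfl hr.2)
        have hd'' : ∀ᵐ x ∂(volume.restrict (Set.Ioc (0:ℝ) r)), δ' x ∈ Set.Icc (0:ℝ) (d:ℝ) :=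
          ae_restrict_of_ae_restrict_of_subset hsub hd'
        filter_upwards [hd'', hae_eq r hr] with x h1x h2x
        have hx1 : (ρ x).toReal = δ' x := h2x
        have h2 : δ' x / d ≤ 1 := by
          rw [div_le_one hdpos]; exact h1x.2
        show (0:ℝ) ≤ 1 - (ρ x).toReal / d
        rw [hx1]
        linarith
      rw [← ofReal_integral_eq_lintegral_ofReal hg_int hg_nn]
      congr 1
      rw [show (∫ x in Set.Ioc (0:ℝ) r, (1 - (ρ x).toReal / d))
          = ∫ x in Set.Ioc (0:ℝ) r, (1 - δ' x / d) from
        integral_congr_ae ((hae_eq r hr).mono fun x hx => by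
          have hx1 : (ρ x).toReal = δ' x := hx
          show (1:ℝ) - (ρ x).toReal / d = 1 - δ' x / d
          rw [hx1])]
      rw [integral_sub hconst ((hδ'int r hr).div_const _)]
      rw [MeasureTheory.integral_div, hδ'eq r hr]
      rw [setIntegral_const, Real.volume_real_Ioc, smul_eq_mul, mul_one,
        max_eq_left (by linarith [hr.1] : (0:ℝ) ≤ r - 0)]
      ring
    have hηneg : ∀ r : ℝ, r < 0 → η (Set.Iic r) = 0 := by
      intro r hrneg
      rw [hηapp _ measurableSet_Iic]
      have hset : Set.Iic r ∩ Set.Ioc (0:ℝ) 1 = ∅ := by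
        ext x
        simp only [Set.mem_inter_iff, Set.mem_Iic, Set.mem_Ioc, Set.mem_empty_iff_false,
          iff_false, not_and]
        intro h1 h2
        linarith
      rw [hset]
      simp
    have hηtop : ∀ r : ℝ, 1 < r → η (Set.Iic r) = η (Set.Iic 1) := by
      intro r hr1
      rw [hηapp _ measurableSet_Iic, hηapp _ measurableSet_Iic]
      have hs1 : Set.Iic r ∩ Set.Ioc (0:ℝ) 1 = Set.Ioc (0:ℝ) 1 := by
        refine Set.inter_eq_right.mpr ?_
        intro x hx; exact (Set.mem_Ioc.mp hx).2.trans hr1.le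
      have hs2 : Set.Iic (1:ℝ) ∩ Set.Ioc (0:ℝ) 1 = Set.Ioc (0:ℝ) 1 := by
        refine Set.inter_eq_right.mpr ?_
        intro x hx; exact (Set.mem_Ioc.mp hx).2
      rw [hs1, hs2]
    have hξη : ξ = η := by
      refine Measure.ext_of_Iic ξ η (fun r => ?_)
      rcases lt_or_ge r 0 with h | h
      · rw [hξneg r h, hηneg r h]
      · rcases le_or_gt r 1 with h1 | h1
        · rw [hξIic r ⟨h, h1⟩, hηIic r ⟨h, h1⟩]
        · rw [hξtop r h1, hηtop r h1, hξIic 1 ⟨zero_le_one, le_rfl⟩,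
            hηIic 1 ⟨zero_le_one, le_rfl⟩]
    have hξT : ξ Tset = 0 := by
      rw [hξη, hηapp _ hTmeas]
      have hzero : ∀ᵐ x ∂(volume : Measure ℝ), x ∈ Tset ∩ Set.Ioc (0:ℝ) 1 →
          ENNReal.ofReal (1 - (ρ x).toReal / d) = (fun _ => (0:ℝ≥0∞)) x := by
        refine Filter.Eventually.of_forall fun x hx => ?_
        have hxd : (ρ x).toReal = d := hx.1
        rw [hxd, div_self hdne, sub_self, ENNReal.ofReal_zero]
      rw [setLIntegral_congr_fun_ae (hTmeas.inter measurableSet_Ioc) hzero]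
      simp
    have h5 : ∫⁻ u, ((fun v : Fin d → ℝ => v i) ⁻¹' Tset).indicator dens u
        ∂(volume.restrict Box) = 0 := by
      rw [← hξapp _ hTmeas]; exact hξT
    have h6 : ∀ᵐ u ∂(volume.restrict Box),
        ((fun v : Fin d → ℝ => v i) ⁻¹' Tset).indicator dens u = 0 :=
      (lintegral_eq_zero_iff' (hdensm.indicator ((measurable_pi_apply i) hTmeas))).mp h5
    filter_upwards [h6] with u hu
    rintro ⟨hlt, hTd⟩
    have hmem : u ∈ (fun v : Fin d → ℝ => v i) ⁻¹' Tset := hTd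
    rw [Set.indicator_of_mem hmem] at hu
    have hle : c u * (if u i < (⨆ j, u j) then 1 else 0) ≤ 0 := ENNReal.ofReal_eq_zero.mp hu
    rw [if_pos hlt, mul_one] at hle
    exact le_antisymm hle (hnn u)
  have hNnull : (volume : Measure ℝ) {x | x ∈ Set.Ioo (0:ℝ) 1 ∧ (ρ x).toReal ≠ δ' x} = 0 := by
    have h := ae_iff.mp hρδ'
    have hseteq : {x : ℝ | ¬ (x ∈ Set.Ioo (0:ℝ) 1 → (ρ x).toReal = δ' x)}
        = {x | x ∈ Set.Ioo (0:ℝ) 1 ∧ (ρ x).toReal ≠ δ' x} := by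
      ext x; rw [Set.mem_setOf_eq, Set.mem_setOf_eq, Classical.not_imp]
    rw [← hseteq]
    exact h
  have hcoordN : ∀ i : Fin d, ∀ᵐ u ∂(volume.restrict Box),
      ¬ (u i ∈ {x | x ∈ Set.Ioo (0:ℝ) 1 ∧ (ρ x).toReal ≠ δ' x}) := by
    intro i
    rw [ae_iff]
    simp only [not_not]
    exact aux_coord_null i hNnull
  have hcoord0 : ∀ i : Fin d, ∀ᵐ u ∂(volume.restrict Box), ¬ (u i = 0) := by
    intro i
    rw [ae_iff]
    simp only [not_not]
    exact aux_coord_null i Real.volume_singleton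
  filter_upwards [ae_restrict_mem hBoxm, ae_all_iff.mpr hPi, ae_all_iff.mpr hcoordN,
    ae_all_iff.mpr hcoord0] with u hu hP hN hz
  rintro ⟨i, hlt, hδd⟩
  have hui : u i ∈ Set.Icc (0:ℝ) 1 := hu i (Set.mem_univ i)
  have hlt1 : u i < 1 := lt_of_lt_of_le hlt (hMle1 u hu)
  have hIoo : u i ∈ Set.Ioo (0:ℝ) 1 := ⟨lt_of_le_of_ne hui.1 (Ne.symm (hz i)), hlt1⟩
  have heq : (ρ (u i)).toReal = δ' (u i) := by
    by_contra hne
    exact hN i ⟨hIoo, hne⟩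
  exact hP i ⟨hlt, heq.trans hδd⟩
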